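/- Let g ∈ L¹(ℝ^d) be nonnegative and suppose there are 0 < β ≤ 1 and c > 0 such that ∫_{|u|≥ρ} g(u) du ≤ c ρ^{−β} for all ρ ≥ 1. Define h(u) = ∫_{ℝ^d} g(u−v)(1+|v|)^{−d−1} dv. Then h ∈ L¹(ℝ^d) and there exists C > 0 such that ∫_{|u|≥ρ} h(u) du ≤ C ρ^{−β} for all ρ ≥ 1. -/

import Mathlib

open MeasureTheory Set Module
open scoped ENNReal

noncomputable section

/-- Euclidean space `ℝ^d`. -/
abbrev Ed (d : ℕ) := EuclideanSpace ℝ (Fin d)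

lemma kint (d : ℕ) : Integrable (fun v : Ed d => (1 + ‖v‖) ^ (-(d : ℝ) - 1)) := by
  simp_rw [show (-(d:ℝ) - 1) = -((d:ℝ)+1) by ring]
  exact integrable_one_add_norm (by rw [finrank_euclideanSpace_fin]; linarith)

lemma ktail1d (d : ℕ) (hd : 0 < d) {r : ℝ} (hr : 0 < r) :
    ∫ y in Ici r, (y ^ (d - 1) * (1 + y) ^ (-(d : ℝ) - 1)) ≤ r⁻¹ := by
  have hmaj : IntegrableOn (fun y : ℝ => y ^ (-2 : ℝ)) (Ici r) :=
    (integrableOn_Ici_iff_integrableOn_Ioi).mpr (integrableOn_Ioi_rpow_of_lt (by norm_num) hr)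
  have hle : ∀ y ∈ Ici r, y ^ (d - 1) * (1 + y) ^ (-(d : ℝ) - 1) ≤ y ^ (-2 : ℝ) := by
    intro y hy
    have hy0 : 0 < y := lt_of_lt_of_le hr hy
    have h1 : (1 + y) ^ (-(d : ℝ) - 1) ≤ y ^ (-(d : ℝ) - 1) :=
      Real.rpow_le_rpow_of_nonpos hy0 (by linarith) (by have : (0:ℝ) ≤ (d:ℝ) := Nat.cast_nonneg d; linarith)
    have h2 : y ^ (d - 1) = y ^ ((d : ℝ) - 1) := by
      rw [← Real.rpow_natCast y (d - 1), Nat.cast_sub hd, Nat.cast_one]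
    calc y ^ (d - 1) * (1 + y) ^ (-(d : ℝ) - 1)
        ≤ y ^ (d - 1) * y ^ (-(d : ℝ) - 1) := by
          apply mul_le_mul_of_nonneg_left h1 (by positivity)
      _ = y ^ (-2 : ℝ) := by
          rw [h2, ← Real.rpow_add hy0]; congr 1; ring
  have hψ : IntegrableOn (fun y : ℝ => y ^ (d - 1) * (1 + y) ^ (-(d : ℝ) - 1)) (Ici r) := by
    refine hmaj.mono' ?_ ?_
    · apply Measurable.aestronglyMeasurable
      fun_prop
    · filter_upwards [ae_restrict_mem measurableSet_Ici] with y hy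
      have hy0 : 0 < y := lt_of_lt_of_le hr hy
      rw [Real.norm_of_nonneg (by positivity)]
      exact hle y hy
  calc ∫ y in Ici r, y ^ (d - 1) * (1 + y) ^ (-(d : ℝ) - 1)
      ≤ ∫ y in Ici r, y ^ (-2 : ℝ) :=
        setIntegral_mono_on hψ hmaj measurableSet_Ici hle
    _ = ∫ y in Ioi r, y ^ (-2 : ℝ) := integral_Ici_eq_integral_Ioi
    _ = -r ^ ((-2 : ℝ) + 1) / ((-2 : ℝ) + 1) := integral_Ioi_rpow_of_lt (by norm_num) hr
    _ = r⁻¹ := by norm_num [Real.rpow_neg_one]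

lemma ktail (d : ℕ) (hd : 0 < d) {r : ℝ} (hr : 0 < r) :
    ∫ v in {v : Ed d | r ≤ ‖v‖}, (1 + ‖v‖) ^ (-(d : ℝ) - 1) ≤
      ((d : ℝ) * (volume (Metric.ball (0 : Ed d) 1)).toReal) * r⁻¹ := by
  haveI : Nontrivial (Ed d) := by
    refine Module.nontrivial_of_finrank_pos (R := ℝ) (M := Ed d) ?_
    rw [finrank_euclideanSpace_fin]; omega
  set f : ℝ → ℝ := Set.indicator (Ici r) (fun y => (1 + y) ^ (-(d : ℝ) - 1)) with hf
  have hset : MeasurableSet {v : Ed d | r ≤ ‖v‖} :=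
    (isClosed_le continuous_const continuous_norm).measurableSet
  have h1 : ∫ v in {v : Ed d | r ≤ ‖v‖}, (1 + ‖v‖) ^ (-(d : ℝ) - 1) = ∫ x : Ed d, f ‖x‖ := by
    rw [← integral_indicator hset]
    apply integral_congr_ae
    filter_upwards with x
    by_cases h : r ≤ ‖x‖ <;>
      simp [hf, Set.indicator_apply, Set.mem_Ici, Set.mem_setOf_eq, h]
  rw [h1, integral_fun_norm_addHaar volume f, finrank_euclideanSpace_fin, nsmul_eq_mul,
    smul_eq_mul, mul_assoc]
  have key : ∫ y in Ioi (0:ℝ), y ^ (d - 1) • f y ≤ r⁻¹ := by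
    have : ∀ y : ℝ, y ^ (d - 1) • f y =
        Set.indicator (Ici r) (fun y => y ^ (d - 1) * (1 + y) ^ (-(d : ℝ) - 1)) y := by
      intro y
      by_cases h : y ∈ Ici r <;> simp [hf, Set.indicator_apply, h]
    simp_rw [this]
    rw [setIntegral_indicator measurableSet_Ici]
    have hinter : Ioi (0:ℝ) ∩ Ici r = Ici r :=
      inter_eq_self_of_subset_right (fun y hy => lt_of_lt_of_le hr hy)
    rw [hinter]
    exact ktail1d d hd hr
  have hmb : (0:ℝ) ≤ (volume (Metric.ball (0 : Ed d) 1)).toReal := ENNReal.toReal_nonneg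
  have hd0 : (0:ℝ) ≤ (d:ℝ) := Nat.cast_nonneg d
  exact mul_le_mul_of_nonneg_left (mul_le_mul_of_nonneg_left key hmb) hd0

lemma tail_aux (d : ℕ) (g k : Ed d → ℝ)
    (hgint : Integrable g) (hgpos : ∀ u, 0 ≤ g u)
    (hkint : Integrable k) (hknn : ∀ v, 0 ≤ k v)
    (β c A : ℝ) (hβ0 : 0 < β) (hβ1 : β ≤ 1) (hc : 0 < c) (hA0 : 0 ≤ A)
    (hgtail : ∀ ρ : ℝ, 1 ≤ ρ → ∫ u in {u : Ed d | ρ ≤ ‖u‖}, g u ≤ c * ρ ^ (-β))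
    (hktail : ∀ r : ℝ, 0 < r → ∫ v in {v : Ed d | r ≤ ‖v‖}, k v ≤ A * r⁻¹) :
    ∀ ρ : ℝ, 1 ≤ ρ →
      ∫ u in {u : Ed d | ρ ≤ ‖u‖}, (∫ v : Ed d, g (u - v) * k v) ≤
        ((2 * c + 2 * (∫ u, g u)) * (∫ v, k v) + 2 * (∫ u, g u) * A + 1) * ρ ^ (-β) := by
  set Ig : ℝ := ∫ u, g u with hIg
  have hIg0 : 0 ≤ Ig := integral_nonneg hgpos
  set Ik : ℝ := ∫ v, k v with hIk
  have hIk0 : 0 ≤ Ik := integral_nonneg hknn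
  -- product integrability
  have hFprod : Integrable (fun p : Ed d × Ed d => g (p.1 - p.2) * k p.2)
      (volume.prod volume) := by
    have := hkint.convolution_integrand (ContinuousLinearMap.mul ℝ ℝ) hgint
    simp only [ContinuousLinearMap.mul_apply'] at this
    exact this.congr (Filter.Eventually.of_forall fun p => mul_comm _ _)
  -- tail of g at ρ/2
  have gtail2 : ∀ ρ : ℝ, 1 ≤ ρ →
      ∫ w in {w : Ed d | ρ/2 ≤ ‖w‖}, g w ≤ (2*c + 2*Ig) * ρ ^ (-β) := by
    intro ρ hρ
    have hρ0 : (0:ℝ) < ρ := by linarith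
    have hρβ : (0:ℝ) < ρ ^ (-β) := Real.rpow_pos_of_pos hρ0 _
    by_cases h2 : 2 ≤ ρ
    · have ht := hgtail (ρ/2) (by linarith)
      have heq : (ρ/2) ^ (-β) = ρ ^ (-β) * (2:ℝ) ^ β := by
        rw [Real.div_rpow hρ0.le (by norm_num : (0:ℝ) ≤ 2),
          show ((2:ℝ)) ^ (-β) = (((2:ℝ)) ^ β)⁻¹ from Real.rpow_neg (by norm_num) β]
        field_simp
      have h2β : (2:ℝ) ^ β ≤ 2 := by
        calc (2:ℝ) ^ β ≤ (2:ℝ) ^ (1:ℝ) := Real.rpow_le_rpow_of_exponent_le one_le_two hβ1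
          _ = 2 := Real.rpow_one 2
      have h2βpos : (0:ℝ) < (2:ℝ) ^ β := Real.rpow_pos_of_pos (by norm_num) β
      calc ∫ w in {w : Ed d | ρ/2 ≤ ‖w‖}, g w ≤ c * (ρ/2) ^ (-β) := ht
        _ = c * (ρ ^ (-β) * 2 ^ β) := by rw [heq]
        _ ≤ (2*c + 2*Ig) * ρ ^ (-β) := by nlinarith [mul_nonneg hρβ.le hc.le]
    · push_neg at h2
      have hged : ∫ w in {w : Ed d | ρ/2 ≤ ‖w‖}, g w ≤ Ig :=
        setIntegral_le_integral hgint (Filter.Eventually.of_forall hgpos)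
      have hlow : (2:ℝ)⁻¹ ≤ ρ ^ (-β) := by
        have h1 : ρ ^ (-(1:ℝ)) ≤ ρ ^ (-β) :=
          Real.rpow_le_rpow_of_exponent_le hρ (by linarith)
        rw [Real.rpow_neg_one] at h1
        have hinv1 : ρ * ρ⁻¹ = 1 := mul_inv_cancel₀ hρ0.ne'
        have h3 : (2:ℝ)⁻¹ ≤ ρ⁻¹ := by nlinarith [inv_nonneg.mpr hρ0.le]
        linarith
      nlinarith [mul_le_mul_of_nonneg_left hlow (by linarith : (0:ℝ) ≤ 2*c + 2*Ig)]
  intro ρ hρ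
  have hρ0 : (0:ℝ) < ρ := by linarith
  have hρβ0 : (0:ℝ) ≤ ρ ^ (-β) := (Real.rpow_pos_of_pos hρ0 _).le
  set S : Set (Ed d) := {u : Ed d | ρ ≤ ‖u‖} with hS
  have hSm : MeasurableSet S := (isClosed_le continuous_const continuous_norm).measurableSet
  set B : Set (Ed d) := {v : Ed d | ρ/2 ≤ ‖v‖} with hB
  have hBm : MeasurableSet B := (isClosed_le continuous_const continuous_norm).measurableSet
  have hFS : Integrable (fun p : Ed d × Ed d => g (p.1 - p.2) * k p.2)
      ((volume.restrict S).prod volume) := by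
    rw [Measure.restrict_prod_eq_prod_univ]
    exact hFprod.restrict
  have hswap : ∫ u in S, ∫ v, g (u - v) * k v = ∫ v, ∫ u in S, g (u - v) * k v :=
    integral_integral_swap hFS
  rw [hswap]
  simp_rw [integral_mul_const]
  set T : Ed d → ℝ := fun v => ∫ u in S, g (u - v) with hT
  show (∫ v, T v * k v) ≤ _
  have hTnn : ∀ v, 0 ≤ T v := fun v => setIntegral_nonneg hSm (fun u _ => hgpos _)
  have hTle : ∀ v, T v ≤ Ig := by
    intro v
    calc T v ≤ ∫ u, g (u - v) :=
          setIntegral_le_integral (hgint.comp_sub_right v)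
            (Filter.Eventually.of_forall fun u => hgpos _)
      _ = Ig := integral_sub_right_eq_self g v
  have hTk_int : Integrable (fun v => T v * k v) := by
    have h := hFS.integral_prod_right
    simp_rw [integral_mul_const] at h
    exact h
  have hsplit : (∫ v, T v * k v) = (∫ v in B, T v * k v) + ∫ v in Bᶜ, T v * k v :=
    (integral_add_compl hBm hTk_int).symm
  -- piece on Bᶜ
  have hTv_small : ∀ v ∈ Bᶜ, T v ≤ (2*c + 2*Ig) * ρ ^ (-β) := by
    intro v hv
    have hvlt : ‖v‖ < ρ/2 := by
      simp only [hB, Set.mem_compl_iff, Set.mem_setOf_eq, not_le] at hv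
      exact hv
    have hsub : S ⊆ {u : Ed d | ρ/2 ≤ ‖u - v‖} := by
      intro u hu
      have h1 : ‖u‖ - ‖v‖ ≤ ‖u - v‖ := norm_sub_norm_le u v
      have h2 : ρ ≤ ‖u‖ := hu
      simp only [Set.mem_setOf_eq]
      linarith
    have hmono : T v ≤ ∫ u in {u : Ed d | ρ/2 ≤ ‖u - v‖}, g (u - v) :=
      setIntegral_mono_set (hgint.comp_sub_right v).integrableOn
        (Filter.Eventually.of_forall fun u => hgpos _) (HasSubset.Subset.eventuallyLE hsub)
    have hchange : ∫ u in {u : Ed d | ρ/2 ≤ ‖u - v‖}, g (u - v)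
        = ∫ w in {w : Ed d | ρ/2 ≤ ‖w‖}, g w := by
      have hpre : {u : Ed d | ρ/2 ≤ ‖u - v‖}
          = (fun u : Ed d => u - v) ⁻¹' {w : Ed d | ρ/2 ≤ ‖w‖} := rfl
      rw [hpre]
      exact (measurePreserving_sub_right volume v).setIntegral_preimage_emb
        (MeasurableEquiv.subRight v).measurableEmbedding _ _
    calc T v ≤ _ := hmono
      _ = _ := hchange
      _ ≤ (2*c+2*Ig) * ρ ^ (-β) := gtail2 ρ hρ
  have h4 : (0:ℝ) ≤ (2*c+2*Ig) * ρ ^ (-β) := mul_nonneg (by linarith) hρβ0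
  have hpieceBc : ∫ v in Bᶜ, T v * k v ≤ (2*c + 2*Ig) * ρ ^ (-β) * Ik := by
    have h1 : ∫ v in Bᶜ, T v * k v ≤ ∫ v in Bᶜ, ((2*c+2*Ig) * ρ ^ (-β)) * k v :=
      setIntegral_mono_on hTk_int.integrableOn ((hkint.const_mul _).integrableOn) hBm.compl
        (fun v hv => mul_le_mul_of_nonneg_right (hTv_small v hv) (hknn v))
    have h2 : ∫ v in Bᶜ, ((2*c+2*Ig) * ρ ^ (-β)) * k v
        = ((2*c+2*Ig) * ρ ^ (-β)) * ∫ v in Bᶜ, k v := integral_const_mul _ _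
    have h3 : ∫ v in Bᶜ, k v ≤ Ik :=
      setIntegral_le_integral hkint (Filter.Eventually.of_forall hknn)
    calc ∫ v in Bᶜ, T v * k v ≤ ∫ v in Bᶜ, ((2*c+2*Ig) * ρ ^ (-β)) * k v := h1
      _ = ((2*c+2*Ig) * ρ ^ (-β)) * ∫ v in Bᶜ, k v := h2
      _ ≤ ((2*c+2*Ig) * ρ ^ (-β)) * Ik := mul_le_mul_of_nonneg_left h3 h4
  -- piece on B
  have hkB : ∫ v in B, k v ≤ A * (ρ/2)⁻¹ := hktail (ρ/2) (by linarith)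
  have hpieceB : ∫ v in B, T v * k v ≤ Ig * (A * (ρ/2)⁻¹) := by
    have h1 : ∫ v in B, T v * k v ≤ ∫ v in B, Ig * k v :=
      setIntegral_mono_on hTk_int.integrableOn ((hkint.const_mul Ig).integrableOn) hBm
        (fun v _ => mul_le_mul_of_nonneg_right (hTle v) (hknn v))
    have h2 : ∫ v in B, Ig * k v = Ig * ∫ v in B, k v := integral_const_mul _ _
    calc ∫ v in B, T v * k v ≤ ∫ v in B, Ig * k v := h1
      _ = Ig * ∫ v in B, k v := h2
      _ ≤ Ig * (A * (ρ/2)⁻¹) := mul_le_mul_of_nonneg_left hkB hIg0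
  have hinv : (ρ/2)⁻¹ = 2 * ρ⁻¹ := by
    rw [inv_div, div_eq_mul_inv]
  have hρinv : ρ⁻¹ ≤ ρ ^ (-β) := by
    have h := Real.rpow_le_rpow_of_exponent_le hρ (neg_le_neg hβ1)
    rwa [Real.rpow_neg_one] at h
  have e1 : Ig * (A * (ρ/2)⁻¹) = 2*Ig*A*ρ⁻¹ := by rw [hinv]; ring
  have e2 : 2*Ig*A*ρ⁻¹ ≤ 2*Ig*A*ρ ^ (-β) :=
    mul_le_mul_of_nonneg_left hρinv (by positivity)
  calc (∫ v, T v * k v) = (∫ v in B, T v * k v) + ∫ v in Bᶜ, T v * k v := hsplit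
    _ ≤ Ig * (A * (ρ/2)⁻¹) + (2*c + 2*Ig) * ρ ^ (-β) * Ik := add_le_add hpieceB hpieceBc
    _ = 2*Ig*A*ρ⁻¹ + (2*c + 2*Ig) * ρ ^ (-β) * Ik := by rw [e1]
    _ ≤ 2*Ig*A*ρ ^ (-β) + (2*c + 2*Ig) * ρ ^ (-β) * Ik := by linarith
    _ ≤ ((2 * c + 2 * Ig) * Ik + 2 * Ig * A + 1) * ρ ^ (-β) := by nlinarith
/-- if `g ∈ L¹(ℝ^d)` is nonnegative with `∫_{|u|≥ρ} g ≤ c ρ^{−β}` for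
`ρ ≥ 1`, then `h(u) = ∫ g(u−v)(1+|v|)^{−d−1} dv` is in `L¹(ℝ^d)` and satisfies
`∫_{|u|≥ρ} h ≤ C ρ^{−β}` for all `ρ ≥ 1`. -/
theorem statement17 (d : ℕ) (hd : 0 < d)
    (g : Ed d → ℝ) (hgint : Integrable g) (hgpos : ∀ u, 0 ≤ g u)
    (β c : ℝ) (hβ : 0 < β ∧ β ≤ 1) (hc : 0 < c)
    (hgtail : ∀ ρ : ℝ, 1 ≤ ρ → ∫ u in {u : Ed d | ρ ≤ ‖u‖}, g u ≤ c * ρ ^ (-β)) :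
    Integrable (fun u : Ed d => ∫ v : Ed d, g (u - v) * (1 + ‖v‖) ^ (-(d : ℝ) - 1)) ∧
    ∃ C : ℝ, 0 < C ∧ ∀ ρ : ℝ, 1 ≤ ρ →
      ∫ u in {u : Ed d | ρ ≤ ‖u‖},
        (∫ v : Ed d, g (u - v) * (1 + ‖v‖) ^ (-(d : ℝ) - 1)) ≤ C * ρ ^ (-β) := by
  obtain ⟨hβ0, hβ1⟩ := hβ
  constructor
  · have hconv := (kint d).integrable_convolution (ContinuousLinearMap.mul ℝ ℝ) hgint
    refine hconv.congr (Filter.Eventually.of_forall fun u => ?_)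
    rw [convolution_def]
    simp only [ContinuousLinearMap.mul_apply']
    exact integral_congr_ae (Filter.Eventually.of_forall fun v => mul_comm _ _)
  · set A : ℝ := (d : ℝ) * (volume (Metric.ball (0 : Ed d) 1)).toReal with hA
    have hA0 : 0 ≤ A := mul_nonneg (Nat.cast_nonneg d) ENNReal.toReal_nonneg
    refine ⟨(2 * c + 2 * (∫ u, g u)) * (∫ v : Ed d, (1 + ‖v‖) ^ (-(d : ℝ) - 1))
        + 2 * (∫ u, g u) * A + 1, ?_, ?_⟩
    · have h1 : 0 ≤ ∫ u, g u := integral_nonneg hgpos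
      have h2 : 0 ≤ ∫ v : Ed d, (1 + ‖v‖) ^ (-(d : ℝ) - 1) :=
        integral_nonneg fun v => Real.rpow_nonneg (by positivity) _
      have h3 : (0:ℝ) ≤ (2 * c + 2 * (∫ u, g u)) * (∫ v : Ed d, (1 + ‖v‖) ^ (-(d : ℝ) - 1)) :=
        mul_nonneg (by linarith) h2
      have h4 : (0:ℝ) ≤ 2 * (∫ u, g u) * A := mul_nonneg (mul_nonneg (by norm_num) h1) hA0
      linarith
    · exact tail_aux d g (fun v => (1 + ‖v‖) ^ (-(d : ℝ) - 1)) hgint hgpos (kint d)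
        (fun v => Real.rpow_nonneg (by positivity) _) β c A hβ0 hβ1 hc hA0 hgtail
        (fun r hr => ktail d hd hr)

end
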